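/- For every pairwise reciprocal matrix A of size n ≥ 1 and every real r > 0, the matrix Ḡ + r·J is positive definite; in particular it is invertible. -/

import Mathlib

open Matrix BigOperators

/-- A pairwise reciprocal matrix (PRM): all entries positive and `A i j * A j i = 1`. -/
def IsPRM {n : ℕ} (A : Matrix (Fin n) (Fin n) ℝ) : Prop :=
  ∀ i j, 0 < A i j ∧ A i j * A j i = 1

/-- The matrix `Ḡ` with diagonal `(n-1) + ∑_{k ≠ i} (A k i)^2` and
off-diagonal `-(A i j + A j i)`. -/
noncomputable def Gbar {n : ℕ} (A : Matrix (Fin n) (Fin n) ℝ) :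
    Matrix (Fin n) (Fin n) ℝ :=
  Matrix.of fun i j =>
    if i = j then ((n : ℝ) - 1) + ∑ k ∈ Finset.univ.filter (fun k => k ≠ i), (A k i) ^ 2
    else -(A i j + A j i)

/-- The all-ones matrix `J`. -/
noncomputable def Jmat (n : ℕ) : Matrix (Fin n) (Fin n) ℝ :=
  Matrix.of fun _ _ => 1

/-- `G = Ḡ + J`. -/
noncomputable def Gmat {n : ℕ} (A : Matrix (Fin n) (Fin n) ℝ) :
    Matrix (Fin n) (Fin n) ℝ :=
  Gbar A + Jmat n

/-- The weighted least squares objective `f(w) = ∑ i ∑ j (w i - A i j * w j)^2`. -/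
noncomputable def wls {n : ℕ} (A : Matrix (Fin n) (Fin n) ℝ) (w : Fin n → ℝ) : ℝ :=
  ∑ i, ∑ j, (w i - A i j * w j) ^ 2
/-- for every PRM `A` of size `n ≥ 1` and every real `r > 0`, the matrix
`Ḡ + r·J` is positive definite; in particular it is invertible. -/
theorem Gbar_add_smul_J_posDef {n : ℕ} (hn : 1 ≤ n)
    (A : Matrix (Fin n) (Fin n) ℝ) (hA : IsPRM A) (r : ℝ) (hr : 0 < r) :
    (Gbar A + r • Jmat n).PosDef ∧ IsUnit (Gbar A + r • Jmat n) := by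
  have hAd : ∀ i, A i i = 1 := fun i => by nlinarith [(hA i i).1, (hA i i).2]
  -- quadratic form of Gbar equals sum of squares
  have key : ∀ x : Fin n → ℝ,
      x ⬝ᵥ ((Gbar A) *ᵥ x) = ∑ i, ∑ j, (x i - A i j * x j) ^ 2 := by
    intro x
    simp only [dotProduct, mulVec, Gbar, Matrix.of_apply]
    have hfilter : ∀ i : Fin n, (Finset.univ.filter (fun k => k ≠ i)) = Finset.univ.erase i := by
      intro i; ext k; simp [Finset.mem_erase, and_comm]
    have hdiag : ∀ i : Fin n, ((n : ℝ) - 1) + ∑ k ∈ Finset.univ.filter (fun k => k ≠ i), (A k i) ^ 2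
        = (n : ℝ) - 2 + ∑ k, (A k i) ^ 2 := by
      intro i
      rw [hfilter, Finset.sum_erase_eq_sub (Finset.mem_univ i), hAd i]
      ring
    have hL : ∀ i : Fin n,
        x i * (∑ j, ((if i = j then ((n : ℝ) - 1) + ∑ k ∈ Finset.univ.filter (fun k => k ≠ i), (A k i) ^ 2 else -(A i j + A j i)) * x j))
        = ((n : ℝ) + ∑ k, (A k i) ^ 2) * x i ^ 2 - ∑ j, (A i j + A j i) * (x i * x j) := by
      intro i
      have h1 : ∀ j : Fin n,
          (if i = j then ((n : ℝ) - 1) + ∑ k ∈ Finset.univ.filter (fun k => k ≠ i), (A k i) ^ 2 else -(A i j + A j i)) * x j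
          = (if i = j then ((n : ℝ) + ∑ k, (A k i) ^ 2) * x j else 0) + (-(A i j + A j i)) * x j := by
        intro j
        by_cases h : i = j
        · subst h; rw [if_pos rfl, if_pos rfl, hdiag i, hAd i]; ring
        · simp [h]
      simp only [h1, Finset.sum_add_distrib, Finset.sum_ite_eq, Finset.mem_univ, if_true]
      have h2 : x i * ∑ j, -(A i j + A j i) * x j = - ∑ j, (A i j + A j i) * (x i * x j) := by
        rw [Finset.mul_sum, ← Finset.sum_neg_distrib]
        exact Finset.sum_congr rfl fun j _ => by ring
      rw [mul_add, h2]; ring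
    rw [Finset.sum_congr rfl fun i _ => hL i]
    have hR : ∀ i : Fin n, ∑ j, (x i - A i j * x j) ^ 2
        = (n : ℝ) * x i ^ 2 - 2 * ∑ j, A i j * (x i * x j) + ∑ j, (A i j)^2 * x j ^ 2 := by
      intro i
      have h3 : ∀ j : Fin n, (x i - A i j * x j)^2 = x i ^ 2 - 2*(A i j * (x i * x j)) + (A i j)^2 * x j ^ 2 := fun j => by ring
      simp only [h3, Finset.sum_add_distrib, Finset.sum_sub_distrib, Finset.sum_const,
        Finset.card_univ, Fintype.card_fin, nsmul_eq_mul, Finset.mul_sum]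
    rw [Finset.sum_congr rfl fun i _ => hR i]
    simp only [Finset.sum_sub_distrib, Finset.sum_add_distrib]
    have c1 : ∑ i : Fin n, ∑ j : Fin n, (A i j)^2 * x j ^ 2 = ∑ i : Fin n, ∑ j : Fin n, (A j i)^2 * x i ^ 2 :=
      Finset.sum_comm
    have c2 : ∑ i : Fin n, ∑ j : Fin n, A j i * (x i * x j) = ∑ i : Fin n, ∑ j : Fin n, A i j * (x i * x j) := by
      rw [Finset.sum_comm]
      exact Finset.sum_congr rfl fun i _ => Finset.sum_congr rfl fun j _ => by ring
    have e1 : ∑ i : Fin n, ((n:ℝ) + ∑ k, (A k i)^2) * x i ^ 2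
        = ∑ i : Fin n, (n:ℝ) * x i ^ 2 + ∑ i : Fin n, ∑ k : Fin n, (A k i)^2 * x i ^ 2 := by
      rw [← Finset.sum_add_distrib]
      refine Finset.sum_congr rfl fun i _ => ?_
      rw [add_mul, Finset.sum_mul]
    have e2 : ∑ i : Fin n, ∑ j : Fin n, (A i j + A j i) * (x i * x j)
        = ∑ i : Fin n, ∑ j : Fin n, A i j * (x i * x j) + ∑ i : Fin n, ∑ j : Fin n, A j i * (x i * x j) := by
      rw [← Finset.sum_add_distrib]
      refine Finset.sum_congr rfl fun i _ => ?_
      rw [← Finset.sum_add_distrib]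
      exact Finset.sum_congr rfl fun j _ => by ring
    have e3 : ∑ i : Fin n, 2 * ∑ j : Fin n, A i j * (x i * x j)
        = 2 * ∑ i : Fin n, ∑ j : Fin n, A i j * (x i * x j) := by
      rw [Finset.mul_sum]
    rw [e1, e2, c2, e3, c1]
    ring
  -- quadratic form of r • J
  have keyJ : ∀ x : Fin n → ℝ, x ⬝ᵥ ((r • Jmat n) *ᵥ x) = r * (∑ i, x i) ^ 2 := by
    intro x
    simp only [dotProduct, mulVec, Jmat, Matrix.smul_apply, Matrix.of_apply, smul_eq_mul, mul_one]
    simp only [← Finset.mul_sum]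
    rw [← Finset.sum_mul]
    ring
  have hherm : (Gbar A + r • Jmat n).IsHermitian := by
    rw [Matrix.IsHermitian]
    ext i j
    simp only [Matrix.conjTranspose_apply, Matrix.add_apply, Matrix.smul_apply, Gbar, Jmat,
      Matrix.of_apply, star_trivial, smul_eq_mul, mul_one]
    by_cases h : i = j
    · subst h; ring
    · rw [if_neg h, if_neg (Ne.symm h)]; ring
  have hform : ∀ x : Fin n → ℝ, x ≠ 0 →
      0 < x ⬝ᵥ ((Gbar A + r • Jmat n) *ᵥ x) := by
    intro x hx
    rw [Matrix.add_mulVec, dotProduct_add, key, keyJ]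
    have hnn : (0:ℝ) ≤ ∑ i, ∑ j, (x i - A i j * x j) ^ 2 :=
      Finset.sum_nonneg fun i _ => Finset.sum_nonneg fun j _ => sq_nonneg _
    rcases eq_or_ne (∑ i, x i) 0 with hs | hs
    · -- need wls > 0
      rcases Function.ne_iff.mp hx with ⟨j, hj⟩
      simp only [Pi.zero_apply] at hj
      have hwpos : 0 < ∑ i, ∑ j, (x i - A i j * x j) ^ 2 := by
        rcases hnn.lt_or_eq with h | h
        · exact h
        · exfalso
          have hall : ∀ i j : Fin n, x i = A i j * x j := by
            intro i k
            have h1 := (Finset.sum_eq_zero_iff_of_nonneg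
              (fun i _ => Finset.sum_nonneg fun j _ => sq_nonneg (x i - A i j * x j))).mp h.symm
              i (Finset.mem_univ i)
            have h2 := (Finset.sum_eq_zero_iff_of_nonneg
              (fun j _ => sq_nonneg (x i - A i j * x j))).mp h1 k (Finset.mem_univ k)
            have := pow_eq_zero_iff (n := 2) (by norm_num) |>.mp h2
            linarith
          rcases lt_or_gt_of_ne hj with hneg | hpos
          · have : ∀ i, x i < 0 := fun i => by
              have := hall i j
              nlinarith [(hA i j).1]
            have : ∑ i, x i < 0 :=
              Finset.sum_neg (fun i _ => this i) ⟨⟨0, hn⟩, Finset.mem_univ _⟩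
            linarith [hs ▸ this]
          · have : ∀ i, 0 < x i := fun i => by
              have := hall i j
              nlinarith [(hA i j).1]
            have : 0 < ∑ i, x i :=
              Finset.sum_pos (fun i _ => this i) ⟨⟨0, hn⟩, Finset.mem_univ _⟩
            linarith [hs ▸ this]
      nlinarith
    · have hp : 0 < (∑ i, x i)^2 := by positivity
      nlinarith
  have hpd : (Gbar A + r • Jmat n).PosDef := by
    refine Matrix.PosDef.of_dotProduct_mulVec_pos hherm fun x hx => ?_
    have := hform x hx
    simpa [star_trivial] using this
  exact ⟨hpd, hpd.isUnit⟩
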